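/- arXiv:1603.00634 — 2 statements merged into one kernel-verified Lean document; each statement's English description precedes it below -/
import Mathlib

section
/- The BKw-G density integrates to one: for any continuous cdf G on ℝ with density g, and parameters a,b,m,n > 0, the integral over ℝ of (1/B(m,n))·a·b·g(t)·G(t)^(a-1)·(1-G(t)^a)^(bn-1)·(1-(1-G(t)^a)^b)^(m-1) dt equals 1. -/
open MeasureTheory Filter Real Topology
open scoped ENNReal NNReal

noncomputable def betaFn (m n : ℝ) : ℝ :=
  ∫ x in (0:ℝ)..1, x ^ (m - 1) * (1 - x) ^ (n - 1)

noncomputable def bkwDensity (G g : ℝ → ℝ) (a b m n t : ℝ) : ℝ :=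
  (1 / betaFn m n) * a * b * g t * G t ^ (a - 1) * (1 - G t ^ a) ^ (b * n - 1) *
    (1 - (1 - G t ^ a) ^ b) ^ (m - 1)

open Set

private lemma bkw_f_meas (m n : ℝ) : Measurable (fun x : ℝ => x ^ (m-1) * (1-x) ^ (n-1)) := by
  fun_prop

private lemma bkw_betaInt {m n : ℝ} (hm : 0 < m) (hn : 0 < n) :
    IntervalIntegrable (fun x : ℝ => x ^ (m-1) * (1-x) ^ (n-1)) volume 0 1 := by
  have h1 : IntervalIntegrable (fun x : ℝ => x ^ (m-1) * (1-x) ^ (n-1)) volume 0 (1/2) := by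
    set C := max 1 ((2:ℝ)⁻¹ ^ (n-1)) with hC
    have hC1 : (1:ℝ) ≤ C := le_max_left _ _
    have hint : IntervalIntegrable (fun x : ℝ => C * x ^ (m-1)) volume 0 (1/2) :=
      (intervalIntegral.intervalIntegrable_rpow' (by linarith)).const_mul C
    refine hint.mono_fun (bkw_f_meas m n).aestronglyMeasurable ?_
    have huIoc : Set.uIoc (0:ℝ) (1/2) = Ioc 0 (1/2) := uIoc_of_le (by norm_num)
    rw [huIoc]
    filter_upwards [ae_restrict_mem measurableSet_Ioc] with x hx
    have hx0 : 0 < x := hx.1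
    have hx2 : x ≤ 1/2 := hx.2
    have hxm : 0 ≤ x ^ (m-1) := Real.rpow_nonneg hx0.le _
    have hb : (1-x) ^ (n-1) ≤ C := by
      rcases le_or_gt 1 n with h | h
      · exact le_trans (Real.rpow_le_one (by linarith) (by linarith) (by linarith)) hC1
      · refine le_trans ?_ (le_max_right _ _)
        exact Real.rpow_le_rpow_of_nonpos (by norm_num) (by linarith) (by linarith)
    have hfx : 0 ≤ x ^ (m-1) * (1-x) ^ (n-1) :=
      mul_nonneg hxm (Real.rpow_nonneg (by linarith) _)
    rw [Real.norm_of_nonneg hfx, Real.norm_of_nonneg (mul_nonneg (by linarith) hxm)]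
    calc x ^ (m-1) * (1-x) ^ (n-1) ≤ x ^ (m-1) * C := by
          exact mul_le_mul_of_nonneg_left hb hxm
      _ = C * x ^ (m-1) := mul_comm _ _
  have h2 : IntervalIntegrable (fun x : ℝ => x ^ (m-1) * (1-x) ^ (n-1)) volume (1/2) 1 := by
    set C := max 1 ((2:ℝ)⁻¹ ^ (m-1)) with hC
    have hC1 : (1:ℝ) ≤ C := le_max_left _ _
    have hint0 : IntervalIntegrable (fun x : ℝ => x ^ (n-1)) volume 0 (1/2) :=
      intervalIntegral.intervalIntegrable_rpow' (by linarith)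
    have hint1 : IntervalIntegrable (fun x : ℝ => (1-x) ^ (n-1)) volume (1/2) 1 := by
      have h := (hint0.comp_sub_left 1).symm
      norm_num at h
      exact h
    have hint : IntervalIntegrable (fun x : ℝ => C * (1-x) ^ (n-1)) volume (1/2) 1 :=
      hint1.const_mul C
    refine hint.mono_fun (bkw_f_meas m n).aestronglyMeasurable ?_
    have huIoc : Set.uIoc (1/2:ℝ) 1 = Ioc (1/2) 1 := uIoc_of_le (by norm_num)
    rw [huIoc]
    filter_upwards [ae_restrict_mem measurableSet_Ioc] with x hx
    have hx0 : (1:ℝ)/2 < x := hx.1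
    have hx2 : x ≤ 1 := hx.2
    have hxn : 0 ≤ (1-x) ^ (n-1) := Real.rpow_nonneg (by linarith) _
    have hb : x ^ (m-1) ≤ C := by
      rcases le_or_gt 1 m with h | h
      · exact le_trans (Real.rpow_le_one (by linarith) (by linarith) (by linarith)) hC1
      · refine le_trans ?_ (le_max_right _ _)
        exact Real.rpow_le_rpow_of_nonpos (by norm_num) (by linarith) (by linarith)
    have hfx : 0 ≤ x ^ (m-1) * (1-x) ^ (n-1) :=
      mul_nonneg (Real.rpow_nonneg (by linarith) _) hxn
    rw [Real.norm_of_nonneg hfx, Real.norm_of_nonneg (mul_nonneg (by linarith) hxn)]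
    calc x ^ (m-1) * (1-x) ^ (n-1) ≤ C * (1-x) ^ (n-1) :=
          mul_le_mul_of_nonneg_right hb hxn
      _ = C * (1-x) ^ (n-1) := rfl
  exact h1.trans h2

private lemma bkw_betaFn_pos {m n : ℝ} (hm : 0 < m) (hn : 0 < n) : 0 < betaFn m n := by
  refine intervalIntegral.intervalIntegral_pos_of_pos_on (bkw_betaInt hm hn) ?_ one_pos
  intro x hx
  exact mul_pos (Real.rpow_pos_of_pos hx.1 _) (Real.rpow_pos_of_pos (by linarith [hx.2]) _)

theorem bkw_density_integrates_to_one
    (G g : ℝ → ℝ) (a b m n : ℝ)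
    (ha : 0 < a) (hb : 0 < b) (hm : 0 < m) (hn : 0 < n)
    (hGcont : Continuous G)
    (hderiv : ∀ t, HasDerivAt G (g t) t)
    (hg : ∀ t, 0 ≤ g t)
    (hG0 : Tendsto G atBot (nhds 0))
    (hG1 : Tendsto G atTop (nhds 1))
    (hGrange : ∀ t, G t ∈ Set.Icc (0:ℝ) 1) :
    ∫ t : ℝ, bkwDensity G g a b m n t = 1 := by
  classical
  set f : ℝ → ℝ := fun x => x ^ (m-1) * (1-x) ^ (n-1) with hf_def
  set B : ℝ := betaFn m n with hB_def
  have hBpos : 0 < B := bkw_betaFn_pos hm hn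
  have hfint : IntervalIntegrable f volume 0 1 := bkw_betaInt hm hn
  have hfnn : ∀ x ∈ Icc (0:ℝ) 1, 0 ≤ f x := fun x hx =>
    mul_nonneg (Real.rpow_nonneg hx.1 _) (Real.rpow_nonneg (by linarith [hx.2]) _)
  set Φ : ℝ → ℝ := fun y => ∫ x in (0:ℝ)..y, f x with hΦ_def
  have hΦ1 : Φ 1 = B := rfl
  have hΦ0 : Φ 0 = 0 := intervalIntegral.integral_same
  -- Φ is continuous on [0,1]
  have hfIntOn : IntegrableOn f (Icc (0:ℝ) 1) :=
    (intervalIntegrable_iff_integrableOn_Icc_of_le zero_le_one).1 hfint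
  have hΦcont : ContinuousOn Φ (Icc (0:ℝ) 1) := by
    have h := intervalIntegral.continuousOn_primitive_interval
      (a := 0) (b := 1) (f := f) (μ := volume) (by rwa [uIcc_of_le zero_le_one])
    rwa [uIcc_of_le zero_le_one] at h
  -- Φ bounds
  have hΦmem : ∀ y ∈ Icc (0:ℝ) 1, Φ y ∈ Icc 0 B := by
    intro y hy
    have hI1 : IntervalIntegrable f volume 0 y :=
      hfint.mono_set (by rw [uIcc_of_le hy.1, uIcc_of_le zero_le_one]; exact Icc_subset_Icc le_rfl hy.2)
    have hI2 : IntervalIntegrable f volume y 1 :=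
      hfint.mono_set (by rw [uIcc_of_le hy.2, uIcc_of_le zero_le_one]; exact Icc_subset_Icc hy.1 le_rfl)
    constructor
    · exact intervalIntegral.integral_nonneg hy.1 (fun x hx => hfnn x ⟨hx.1, le_trans hx.2 hy.2⟩)
    · have hsplit : Φ y + ∫ x in y..(1:ℝ), f x = B := by
        rw [hB_def, betaFn]
        exact intervalIntegral.integral_add_adjacent_intervals hI1 hI2
      have h2 : 0 ≤ ∫ x in y..(1:ℝ), f x :=
        intervalIntegral.integral_nonneg hy.2 (fun x hx => hfnn x ⟨le_trans hy.1 hx.1, hx.2⟩)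
      linarith
  -- the W map
  set W : ℝ → ℝ := fun u => 1 - (1 - u ^ a) ^ b with hW_def
  have hWcont : Continuous W := by
    have h1 : Continuous fun u : ℝ => u ^ a :=
      continuous_iff_continuousAt.2 fun x => Real.continuousAt_rpow_const x a (Or.inr ha.le)
    have h2 : Continuous fun u : ℝ => (1 - u ^ a) ^ b :=
      continuous_iff_continuousAt.2 fun x =>
        (Real.continuousAt_rpow_const _ b (Or.inr hb.le)).comp
          ((continuous_const.sub h1).continuousAt)
    exact continuous_const.sub h2
  have hWmem : ∀ u ∈ Icc (0:ℝ) 1, W u ∈ Icc (0:ℝ) 1 := by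
    intro u hu
    have h1 : 0 ≤ u ^ a := Real.rpow_nonneg hu.1 _
    have h2 : u ^ a ≤ 1 := Real.rpow_le_one hu.1 hu.2 ha.le
    have h3 : 0 ≤ (1 - u ^ a) ^ b := Real.rpow_nonneg (by linarith) _
    have h4 : (1 - u ^ a) ^ b ≤ 1 := Real.rpow_le_one (by linarith) (by linarith) hb.le
    exact ⟨by simp only [hW_def]; linarith, by simp only [hW_def]; linarith⟩
  have hW0 : W 0 = 0 := by
    simp only [hW_def]
    rw [Real.zero_rpow ha.ne', sub_zero, Real.one_rpow, sub_self]
  have hW1 : W 1 = 1 := by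
    simp only [hW_def]
    rw [Real.one_rpow, sub_self, Real.zero_rpow hb.ne', sub_zero]
  -- density, F
  set ρ : ℝ → ℝ := fun t => bkwDensity G g a b m n t with hρ_def
  set F : ℝ → ℝ := fun t => B⁻¹ * Φ (W (G t)) with hF_def
  have hMono : Monotone G :=
    monotone_of_deriv_nonneg (fun t => (hderiv t).differentiableAt)
      (fun t => by rw [(hderiv t).deriv]; exact hg t)
  have hFcont : Continuous F :=
    continuous_const.mul (hΦcont.comp_continuous (hWcont.comp hGcont)
      (fun t => hWmem (G t) (hGrange t)))
  have hF01 : ∀ t, F t ∈ Icc (0:ℝ) 1 := by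
    intro t
    have h := hΦmem (W (G t)) (hWmem (G t) (hGrange t))
    constructor
    · exact mul_nonneg (by positivity) h.1
    · calc B⁻¹ * Φ (W (G t)) ≤ B⁻¹ * B :=
            mul_le_mul_of_nonneg_left h.2 (by positivity)
        _ = 1 := inv_mul_cancel₀ hBpos.ne'
  -- nonnegativity of ρ
  have hρnn : ∀ t, 0 ≤ ρ t := by
    intro t
    have h1 : 0 ≤ G t ^ a := Real.rpow_nonneg (hGrange t).1 _
    have h2 : G t ^ a ≤ 1 := Real.rpow_le_one (hGrange t).1 (hGrange t).2 ha.le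
    have h3 : 0 ≤ (1 - G t ^ a) ^ b := Real.rpow_nonneg (by linarith) _
    have h4 : (1 - G t ^ a) ^ b ≤ 1 := Real.rpow_le_one (by linarith) (by linarith) hb.le
    have h0 : 0 ≤ 1 / betaFn m n := one_div_nonneg.2 (le_of_lt hBpos)
    simp only [hρ_def, bkwDensity]
    exact mul_nonneg (mul_nonneg (mul_nonneg (mul_nonneg (mul_nonneg (mul_nonneg h0 ha.le)
      hb.le) (hg t)) (Real.rpow_nonneg (hGrange t).1 _)) (Real.rpow_nonneg (by linarith) _))
      (Real.rpow_nonneg (by linarith) _)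
  -- measurability of ρ
  have hgm : Measurable g := by
    have : g = deriv G := funext fun t => ((hderiv t).deriv).symm
    rw [this]; exact measurable_deriv G
  have hGm : Measurable G := hGcont.measurable
  have hρmeas : Measurable ρ := by
    simp only [hρ_def, bkwDensity]
    fun_prop
  -- g vanishes where G is 0 or 1
  have hgz0 : ∀ t, G t = 0 → g t = 0 := by
    intro t ht
    have hconst : ∀ z, z < t → G z = 0 := fun z hz =>
      le_antisymm (ht ▸ hMono hz.le) (hGrange z).1
    have h1 : Tendsto (slope G t) (𝓝[<] t) (𝓝 (g t)) :=
      (hasDerivAt_iff_tendsto_slope.1 (hderiv t)).mono_left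
        (nhdsWithin_mono t fun z hz => ne_of_lt hz)
    have h2 : Tendsto (slope G t) (𝓝[<] t) (𝓝 0) := by
      refine Tendsto.congr' ?_ tendsto_const_nhds
      filter_upwards [self_mem_nhdsWithin] with z hz
      simp [slope, hconst z hz, ht]
    exact tendsto_nhds_unique h1 h2 ▸ rfl
  have hgz1 : ∀ t, G t = 1 → g t = 0 := by
    intro t ht
    have hconst : ∀ z, t < z → G z = 1 := fun z hz =>
      le_antisymm (hGrange z).2 (ht ▸ hMono hz.le)
    have h1 : Tendsto (slope G t) (𝓝[>] t) (𝓝 (g t)) :=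
      (hasDerivAt_iff_tendsto_slope.1 (hderiv t)).mono_left
        (nhdsWithin_mono t fun z hz => ne_of_gt hz)
    have h2 : Tendsto (slope G t) (𝓝[>] t) (𝓝 0) := by
      refine Tendsto.congr' ?_ tendsto_const_nhds
      filter_upwards [self_mem_nhdsWithin] with z hz
      simp [slope, hconst z hz, ht]
    exact tendsto_nhds_unique h1 h2 ▸ rfl
  have hρ_zero : ∀ t, ¬(0 < G t ∧ G t < 1) → ρ t = 0 := by
    intro t ht
    have hgt : g t = 0 := by
      rcases not_and_or.1 ht with h | h
      · exact hgz0 t (le_antisymm (not_lt.1 h) (hGrange t).1)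
      · exact hgz1 t (le_antisymm (hGrange t).2 (not_lt.1 h))
    simp [hρ_def, bkwDensity, hgt]
  -- the derivative computation on U
  have hFderiv : ∀ t, 0 < G t → G t < 1 → HasDerivAt F (ρ t) t := by
    intro t h0 h1
    have hGa_pos : 0 < G t ^ a := Real.rpow_pos_of_pos h0 a
    have hGa_lt1 : G t ^ a < 1 := Real.rpow_lt_one (hGrange t).1 h1 ha
    have hq_pos : 0 < 1 - G t ^ a := by linarith
    have hq_lt1 : 1 - G t ^ a < 1 := by linarith
    have hqb_pos : 0 < (1 - G t ^ a) ^ b := Real.rpow_pos_of_pos hq_pos b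
    have hqb_lt1 : (1 - G t ^ a) ^ b < 1 := Real.rpow_lt_one hq_pos.le hq_lt1 hb
    have hwt : W (G t) = 1 - (1 - G t ^ a) ^ b := rfl
    have hw_mem : W (G t) ∈ Ioo (0:ℝ) 1 := by
      rw [hwt]; constructor <;> [linarith; linarith]
    have d1 : HasDerivAt (fun s => G s ^ a) (a * G t ^ (a-1) * g t) t :=
      (Real.hasDerivAt_rpow_const (p := a) (Or.inl h0.ne')).comp t (hderiv t)
    have d2 : HasDerivAt (fun s => (1 - G s ^ a) ^ b)
        (b * (1 - G t ^ a) ^ (b-1) * -(a * G t ^ (a-1) * g t)) t :=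
      by have h := (Real.hasDerivAt_rpow_const (x := 1 - G t ^ a) (p := b) (Or.inl hq_pos.ne')).comp t (d1.const_sub 1); exact h
    have d3 : HasDerivAt (fun s => W (G s))
        (b * (1 - G t ^ a) ^ (b-1) * (a * G t ^ (a-1) * g t)) t := by
      have h := d2.const_sub 1
      simpa using h
    have hfc : ContinuousAt f (W (G t)) := by
      have c1 : ContinuousAt (fun x : ℝ => x ^ (m-1)) (W (G t)) :=
        Real.continuousAt_rpow_const _ _ (Or.inl hw_mem.1.ne')
      have c2 : ContinuousAt (fun x : ℝ => (1-x) ^ (n-1)) (W (G t)) := by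
        exact (Real.continuousAt_rpow_const (1 - W (G t)) (n-1)
          (Or.inl (sub_ne_zero.2 (ne_of_gt hw_mem.2)))).comp
          ((continuous_const.sub continuous_id).continuousAt (x := W (G t)))
      exact c1.mul c2
    have hIw : IntervalIntegrable f volume 0 (W (G t)) :=
      hfint.mono_set (by
        rw [uIcc_of_le hw_mem.1.le, uIcc_of_le zero_le_one]
        exact Icc_subset_Icc le_rfl hw_mem.2.le)
    have dΦ : HasDerivAt Φ (f (W (G t))) (W (G t)) :=
      intervalIntegral.integral_hasDerivAt_right hIw
        ((bkw_f_meas m n).stronglyMeasurable.stronglyMeasurableAtFilter) hfc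
    have dF : HasDerivAt F
        (B⁻¹ * (f (W (G t)) * (b * (1 - G t ^ a) ^ (b-1) * (a * G t ^ (a-1) * g t)))) t :=
      by have h := ((dΦ.comp t d3).const_mul B⁻¹); exact h
    convert dF using 1
    have e2 : ((1 - G t ^ a) ^ b) ^ (n - 1) * (1 - G t ^ a) ^ (b - 1)
        = (1 - G t ^ a) ^ (b * n - 1) := by
      rw [← Real.rpow_mul hq_pos.le, ← Real.rpow_add hq_pos]
      congr 1
      ring
    show ρ t = _
    simp only [hρ_def, bkwDensity, hf_def, hwt]
    rw [sub_sub_cancel, one_div, ← e2]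
    ring
  -- minimal points at each level
  have key : ∀ c : ℝ, 0 < c → c < 1 → ∃ x, G x = c ∧ ∀ y, c ≤ G y → x ≤ y := by
    intro c hc0 hc1
    set S := {t | c ≤ G t} with hS
    have hSne : S.Nonempty := by
      obtain ⟨y, hy⟩ := (hG1.eventually (eventually_gt_nhds hc1)).exists
      exact ⟨y, hy.le⟩
    have hSbdd : BddBelow S := by
      obtain ⟨s0, hs0⟩ := eventually_atBot.1 (hG0.eventually (eventually_lt_nhds hc0))
      refine ⟨s0, fun y hy => ?_⟩
      by_contra hcon
      exact absurd hy (not_le.2 (hs0 y (le_of_not_ge hcon)))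
    have hSclosed : IsClosed S := isClosed_Ici.preimage hGcont
    have hxS : sInf S ∈ S := hSclosed.csInf_mem hSne hSbdd
    refine ⟨sInf S, le_antisymm ?_ hxS, fun y hy => csInf_le hSbdd hy⟩
    have hlt : ∀ z ∈ Iio (sInf S), G z ≤ c := by
      intro z hz
      by_contra hcon
      exact absurd (csInf_le hSbdd (le_of_lt (not_le.1 hcon))) (not_le.2 hz)
    exact le_of_tendsto ((hGcont.tendsto _).mono_left nhdsWithin_le_nhds)
      (eventually_nhdsWithin_of_forall hlt)
  -- the sequences
  set ε : ℕ → ℝ := fun k => 1 / (k + 2) with hε_def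
  have hεpos : ∀ k, 0 < ε k := fun k => by positivity
  have hεle : ∀ k, ε k ≤ 1/2 := by
    intro k
    simp only [hε_def]
    rw [div_le_div_iff₀ (by positivity) (by norm_num)]
    have : (0:ℝ) ≤ (k:ℝ) := Nat.cast_nonneg k
    linarith
  have hεlt1 : ∀ k, ε k < 1 := fun k => lt_of_le_of_lt (hεle k) (by norm_num)
  have hε0 : Tendsto ε atTop (𝓝 0) := by
    have h2 : Tendsto (fun k : ℕ => (k:ℝ) + 2) atTop atTop :=
      tendsto_atTop_add_const_right _ 2 tendsto_natCast_atTop_atTop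
    have h3 := h2.inv_tendsto_atTop; simp only [hε_def, one_div]; exact h3
  have hα_ex : ∀ k : ℕ, ∃ x, G x = ε k ∧ ∀ y, ε k ≤ G y → x ≤ y :=
    fun k => key _ (hεpos k) (hεlt1 k)
  have hβ_ex : ∀ k : ℕ, ∃ x, G x = 1 - ε k ∧ ∀ y, 1 - ε k ≤ G y → x ≤ y :=
    fun k => key _ (by linarith [hεlt1 k]) (by linarith [hεpos k])
  choose α hαG hαmin using hα_ex
  choose β hβG hβmin using hβ_ex
  have hαβ : ∀ k, α k ≤ β k := fun k => hαmin k (β k) (by rw [hβG k]; linarith [hεle k])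
  have hU : ∀ k, ∀ t ∈ Icc (α k) (β k), 0 < G t ∧ G t < 1 := by
    intro k t ht
    constructor
    · calc (0:ℝ) < ε k := hεpos k
        _ = G (α k) := (hαG k).symm
        _ ≤ G t := hMono ht.1
    · calc G t ≤ G (β k) := hMono ht.2
        _ = 1 - ε k := hβG k
        _ < 1 := by linarith [hεpos k]
  have hcov : ∀ t, 0 < G t → G t < 1 → ∃ k, t ∈ Icc (α k) (β k) := by
    intro t h0 h1
    obtain ⟨k, hk⟩ := (hε0.eventually (eventually_lt_nhds (lt_min h0 (show (0:ℝ) < 1 - G t by linarith)))).exists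
    refine ⟨k, hαmin k t (le_of_lt (lt_of_lt_of_le hk (min_le_left (G t) (1 - G t)))), ?_⟩
    by_contra hcon
    have hβt : G (β k) ≤ G t := hMono (le_of_lt (not_le.1 hcon))
    rw [hβG k] at hβt
    have : ε k < 1 - G t := lt_of_lt_of_le hk (min_le_right (G t) (1 - G t))
    linarith
  -- FTC on each [α k, β k]
  have hIntIoc : ∀ k, IntegrableOn ρ (Ioc (α k) (β k)) :=
    fun k => intervalIntegral.integrableOn_deriv_of_nonneg hFcont.continuousOn
      (fun x hx => hFderiv x (hU k x (Ioo_subset_Icc_self hx)).1 (hU k x (Ioo_subset_Icc_self hx)).2)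
      (fun x _ => hρnn x)
  have hIntIcc : ∀ k, IntegrableOn ρ (Icc (α k) (β k)) := by
    intro k
    rw [integrableOn_Icc_iff_integrableOn_Ioc]
    exact hIntIoc k
  have hFTC : ∀ k, ∫ t in Icc (α k) (β k), ρ t = F (β k) - F (α k) := by
    intro k
    rw [integral_Icc_eq_integral_Ioc, ← intervalIntegral.integral_of_le (hαβ k)]
    exact intervalIntegral.integral_eq_sub_of_hasDerivAt_of_le (hαβ k)
      hFcont.continuousOn
      (fun x hx => hFderiv x (hU k x (Ioo_subset_Icc_self hx)).1 (hU k x (Ioo_subset_Icc_self hx)).2)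
      ((intervalIntegrable_iff_integrableOn_Ioc_of_le (hαβ k)).2 (hIntIoc k))
  -- limits of F along the sequences
  have hFα : Tendsto (fun k => F (α k)) atTop (𝓝 0) := by
    have hWε : Tendsto (fun k => W (ε k)) atTop (𝓝 0) := by
      have h := (hWcont.tendsto 0).comp hε0
      rwa [hW0] at h
    have hmem : ∀ k, W (ε k) ∈ Icc (0:ℝ) 1 :=
      fun k => hWmem _ ⟨(hεpos k).le, (hεlt1 k).le⟩
    have hΦε : Tendsto (fun k => Φ (W (ε k))) atTop (𝓝 (Φ 0)) :=
      ((hΦcont 0 ⟨le_rfl, zero_le_one⟩).tendsto).comp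
        (tendsto_nhdsWithin_iff.2 ⟨hWε, Eventually.of_forall hmem⟩)
    have h2 : Tendsto (fun k => B⁻¹ * Φ (W (ε k))) atTop (𝓝 (B⁻¹ * Φ 0)) := hΦε.const_mul B⁻¹
    rw [hΦ0, mul_zero] at h2
    refine h2.congr fun k => ?_
    simp only [hF_def, hαG k]
  have hFβ : Tendsto (fun k => F (β k)) atTop (𝓝 1) := by
    have hε1 : Tendsto (fun k => 1 - ε k) atTop (𝓝 1) := by
      have h := hε0.const_sub (1:ℝ)
      simpa using h
    have hWε : Tendsto (fun k => W (1 - ε k)) atTop (𝓝 1) := by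
      have h := (hWcont.tendsto 1).comp hε1
      rwa [hW1] at h
    have hmem : ∀ k, W (1 - ε k) ∈ Icc (0:ℝ) 1 :=
      fun k => hWmem _ ⟨by linarith [hεlt1 k], by linarith [hεpos k]⟩
    have hΦε : Tendsto (fun k => Φ (W (1 - ε k))) atTop (𝓝 (Φ 1)) :=
      ((hΦcont 1 ⟨zero_le_one, le_rfl⟩).tendsto).comp
        (tendsto_nhdsWithin_iff.2 ⟨hWε, Eventually.of_forall hmem⟩)
    have h2 : Tendsto (fun k => B⁻¹ * Φ (W (1 - ε k))) atTop (𝓝 (B⁻¹ * Φ 1)) :=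
      hΦε.const_mul B⁻¹
    rw [hΦ1, inv_mul_cancel₀ hBpos.ne'] at h2
    refine h2.congr fun k => ?_
    simp only [hF_def, hβG k]
  have hxlim : Tendsto (fun k => F (β k) - F (α k)) atTop (𝓝 1) := by
    simpa using hFβ.sub hFα
  -- monotonicity of the sequences
  have hεanti : Antitone ε := by
    intro i j hij
    simp only [hε_def]
    apply one_div_le_one_div_of_le (by positivity)
    have h : (i:ℝ) ≤ (j:ℝ) := by exact_mod_cast hij
    linarith
  have hαanti : Antitone α := fun i j hij => hαmin j (α i) (by rw [hαG i]; exact hεanti hij)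
  have hβmono : Monotone β := fun i j hij => hβmin i (β j) (by rw [hβG j]; linarith [hεanti hij])
  -- lintegral assembly
  set φ : ℝ → ℝ≥0∞ := fun t => ENNReal.ofReal (ρ t) with hφ_def
  have hφmeas : Measurable φ := hρmeas.ennreal_ofReal
  have hsm : ∀ k, MeasurableSet (Icc (α k) (β k)) := fun k => measurableSet_Icc
  have hmono : Monotone fun k => (Icc (α k) (β k)).indicator φ := by
    intro i j hij
    exact Set.indicator_le_indicator_of_subset
      (Icc_subset_Icc (hαanti hij) (hβmono hij)) (fun t => zero_le)
  have hindsup : ∀ t, φ t = ⨆ k, (Icc (α k) (β k)).indicator φ t := by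
    intro t
    rcases Classical.em (0 < G t ∧ G t < 1) with h | h
    · obtain ⟨k, hk⟩ := hcov t h.1 h.2
      apply le_antisymm
      · refine le_trans (le_of_eq ?_) (le_iSup _ k)
        rw [Set.indicator_of_mem hk]
      · exact iSup_le fun j => Set.indicator_le_self' (fun _ _ => zero_le) t
    · have hz : φ t = 0 := by simp [hφ_def, hρ_zero t h]
      rw [hz]
      exact le_antisymm (zero_le)
        (iSup_le fun j => le_trans (Set.indicator_le_self' (fun _ _ => zero_le) t) hz.le)
  have hlint : ∀ k, ∫⁻ t, (Icc (α k) (β k)).indicator φ t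
      = ENNReal.ofReal (F (β k) - F (α k)) := by
    intro k
    rw [lintegral_indicator (hsm k), ← hFTC k]
    exact (ofReal_integral_eq_lintegral_ofReal (hIntIcc k) (ae_of_all _ (fun x => hρnn x))).symm
  calc ∫ t : ℝ, bkwDensity G g a b m n t = ∫ t, ρ t := rfl
    _ = (∫⁻ t, φ t).toReal := by
        rw [integral_eq_lintegral_of_nonneg_ae (ae_of_all _ hρnn) hρmeas.aestronglyMeasurable]
    _ = 1 := by
        have h1 : ∫⁻ t, φ t = ⨆ k, ∫⁻ t, (Icc (α k) (β k)).indicator φ t := by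
          rw [← lintegral_iSup (fun k => hφmeas.indicator (hsm k)) hmono]
          exact lintegral_congr fun t => hindsup t
        have h2 : ∫⁻ t, φ t = ⨆ k, ENNReal.ofReal (F (β k) - F (α k)) := by
          rw [h1]; exact iSup_congr hlint
        have h3 : (⨆ k, ENNReal.ofReal (F (β k) - F (α k))) = ENNReal.ofReal 1 := by
          apply le_antisymm
          · refine iSup_le fun k => ENNReal.ofReal_le_ofReal ?_
            have h4 := (hF01 (β k)).2
            have h5 := (hF01 (α k)).1
            linarith
          · have htend : Tendsto (fun k => ENNReal.ofReal (F (β k) - F (α k))) atTop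
                (𝓝 (ENNReal.ofReal 1)) := (ENNReal.continuous_ofReal.tendsto 1).comp hxlim
            exact le_of_tendsto htend (Eventually.of_forall fun k => le_iSup (fun k => ENNReal.ofReal (F (β k) - F (α k))) k)
        rw [h2, h3, ENNReal.toReal_ofReal zero_le_one]
end

section
/- As t → ∞ (equivalently G(t) → 1), the survival function of the BKw-G family satisfies 1 - I_{1-(1-G(t)^a)^b}(m,n) ~ (1-G(t)^a)^{bn}/(n·B(m,n)), i.e., the ratio of the two sides tends to 1. -/
open Real Filter

noncomputable def regIncBeta (x m n : ℝ) : ℝ :=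
  (1 / betaFn m n) * ∫ v in (0:ℝ)..x, v ^ (m - 1) * (1 - v) ^ (n - 1)

section Aux

variable {m n : ℝ}

/-- The beta integrand is interval integrable on `[0,1]`. -/
lemma betaIntegrand_intInt (hm : 0 < m) (hn : 0 < n) :
    IntervalIntegrable (fun v : ℝ => v ^ (m - 1) * (1 - v) ^ (n - 1))
      MeasureTheory.volume 0 1 := by
  have h1 : IntervalIntegrable (fun v : ℝ => v ^ (m - 1) * (1 - v) ^ (n - 1))
      MeasureTheory.volume 0 (1/2) := by
    apply IntervalIntegrable.mul_continuousOn
    · exact intervalIntegral.intervalIntegrable_rpow' (by linarith)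
    · apply ContinuousOn.rpow_const (by fun_prop)
      intro x hx
      rw [Set.uIcc_of_le (by norm_num)] at hx
      left; intro h; linarith [hx.2]
  have h2 : IntervalIntegrable (fun v : ℝ => v ^ (m - 1) * (1 - v) ^ (n - 1))
      MeasureTheory.volume (1/2) 1 := by
    apply IntervalIntegrable.continuousOn_mul
    · have := (intervalIntegral.intervalIntegrable_rpow'
        (a := 0) (b := 1/2) (r := n - 1) (by linarith)).comp_sub_left 1
      norm_num at this
      exact this.symm
    · apply ContinuousOn.rpow_const (by fun_prop)
      intro x hx
      rw [Set.uIcc_of_le (by norm_num)] at hx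
      left; intro h; rw [h] at hx; norm_num at hx
  exact h1.trans h2

lemma betaFn_pos (hm : 0 < m) (hn : 0 < n) : 0 < betaFn m n := by
  apply intervalIntegral.intervalIntegral_pos_of_pos_on (betaIntegrand_intInt hm hn)
  · intro x hx
    exact mul_pos (Real.rpow_pos_of_pos hx.1 _)
      (Real.rpow_pos_of_pos (by linarith [hx.2]) _)
  · norm_num

/-- Value of the model integral. -/
lemma model_integral (hn : 0 < n) {u : ℝ} (hu : 0 ≤ u) :
    (∫ v in (1 - u)..1, (1 - v) ^ (n - 1)) = u ^ n / n := by
  have h := intervalIntegral.integral_comp_sub_left (a := 1 - u) (b := 1)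
    (fun w : ℝ => w ^ (n - 1)) 1
  simp only [sub_self, sub_sub_cancel] at h
  rw [h, integral_rpow (Or.inl (by linarith))]
  rw [Real.zero_rpow (by linarith), sub_zero, show n - 1 + 1 = n by ring]

/-- Bounds on the tail integral for `u ∈ (0, 1/2]`. -/
lemma tail_bounds (hm : 0 < m) (hn : 0 < n) {u : ℝ} (hu : 0 < u) (hu2 : u ≤ 1/2) :
    min ((1 - u) ^ (m - 1)) 1 * (u ^ n / n) ≤
      (∫ v in (1 - u)..1, v ^ (m - 1) * (1 - v) ^ (n - 1)) ∧
    (∫ v in (1 - u)..1, v ^ (m - 1) * (1 - v) ^ (n - 1)) ≤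
      max ((1 - u) ^ (m - 1)) 1 * (u ^ n / n) := by
  have hsub : Set.uIcc (1 - u) 1 ⊆ Set.uIcc (0:ℝ) 1 := by
    rw [Set.uIcc_of_le (by linarith), Set.uIcc_of_le (by norm_num)]
    exact Set.Icc_subset_Icc (by linarith) le_rfl
  have hf : IntervalIntegrable (fun v : ℝ => v ^ (m - 1) * (1 - v) ^ (n - 1))
      MeasureTheory.volume (1 - u) 1 := (betaIntegrand_intInt hm hn).mono_set hsub
  have hmodel : ∀ c : ℝ, IntervalIntegrable (fun v : ℝ => c * (1 - v) ^ (n - 1))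
      MeasureTheory.volume (1 - u) 1 := by
    intro c
    apply IntervalIntegrable.continuousOn_mul
    · have := (intervalIntegral.intervalIntegrable_rpow'
        (a := 0) (b := u) (r := n - 1) (by linarith)).comp_sub_left 1
      simpa using this.symm
    · exact continuousOn_const
  have hcint : ∀ c : ℝ, (∫ v in (1 - u)..1, c * (1 - v) ^ (n - 1)) = c * (u ^ n / n) := by
    intro c
    rw [intervalIntegral.integral_const_mul, model_integral hn hu.le]
  have hptle : ∀ v ∈ Set.Icc (1 - u) 1,
      min ((1 - u) ^ (m - 1)) 1 ≤ v ^ (m - 1) := by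
    intro v hv
    have hv0 : (0:ℝ) < v := by linarith [hv.1]
    rcases le_total 1 m with h | h
    · calc min ((1 - u) ^ (m - 1)) 1 ≤ (1 - u) ^ (m - 1) := min_le_left _ _
        _ ≤ v ^ (m - 1) := Real.rpow_le_rpow (by linarith) hv.1 (by linarith)
    · calc min ((1 - u) ^ (m - 1)) 1 ≤ 1 := min_le_right _ _
        _ = (1:ℝ) ^ (m - 1) := (Real.one_rpow _).symm
        _ ≤ v ^ (m - 1) := Real.rpow_le_rpow_of_nonpos hv0 hv.2 (by linarith)
  have hptge : ∀ v ∈ Set.Icc (1 - u) 1,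
      v ^ (m - 1) ≤ max ((1 - u) ^ (m - 1)) 1 := by
    intro v hv
    have hv0 : (0:ℝ) < 1 - u := by linarith
    rcases le_total 1 m with h | h
    · calc v ^ (m - 1) ≤ (1:ℝ) ^ (m - 1) := Real.rpow_le_rpow (by linarith [hv.1]) hv.2 (by linarith)
        _ = 1 := Real.one_rpow _
        _ ≤ max ((1 - u) ^ (m - 1)) 1 := le_max_right _ _
    · calc v ^ (m - 1) ≤ (1 - u) ^ (m - 1) :=
          Real.rpow_le_rpow_of_nonpos hv0 hv.1 (by linarith)
        _ ≤ max ((1 - u) ^ (m - 1)) 1 := le_max_left _ _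
  constructor
  · rw [← hcint (min ((1 - u) ^ (m - 1)) 1)]
    apply intervalIntegral.integral_mono_on (by linarith) (hmodel _) hf
    intro v hv
    have h1 : (0:ℝ) ≤ (1 - v) ^ (n - 1) := Real.rpow_nonneg (by linarith [hv.2]) _
    exact mul_le_mul_of_nonneg_right (hptle v hv) h1
  · rw [← hcint (max ((1 - u) ^ (m - 1)) 1)]
    apply intervalIntegral.integral_mono_on (by linarith) hf (hmodel _)
    intro v hv
    have h1 : (0:ℝ) ≤ (1 - v) ^ (n - 1) := Real.rpow_nonneg (by linarith [hv.2]) _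
    exact mul_le_mul_of_nonneg_right (hptge v hv) h1

/-- Splitting: `betaFn = ∫_0^{1-u} + ∫_{1-u}^1`. -/
lemma betaFn_split (hm : 0 < m) (hn : 0 < n) {u : ℝ} (hu : 0 < u) (hu2 : u ≤ 1/2) :
    (∫ v in (0:ℝ)..(1 - u), v ^ (m - 1) * (1 - v) ^ (n - 1)) +
      (∫ v in (1 - u)..1, v ^ (m - 1) * (1 - v) ^ (n - 1)) = betaFn m n := by
  have h1 : Set.uIcc (0:ℝ) (1 - u) ⊆ Set.uIcc (0:ℝ) 1 := by
    rw [Set.uIcc_of_le (by linarith), Set.uIcc_of_le (by norm_num)]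
    exact Set.Icc_subset_Icc le_rfl (by linarith)
  have h2 : Set.uIcc (1 - u) (1:ℝ) ⊆ Set.uIcc (0:ℝ) 1 := by
    rw [Set.uIcc_of_le (by linarith), Set.uIcc_of_le (by norm_num)]
    exact Set.Icc_subset_Icc (by linarith) le_rfl
  exact intervalIntegral.integral_add_adjacent_intervals
    ((betaIntegrand_intInt hm hn).mono_set h1)
    ((betaIntegrand_intInt hm hn).mono_set h2)

end Aux

theorem bkw_survival_asymptote_atTop
    (G : ℝ → ℝ) (a b m n : ℝ)
    (ha : 0 < a) (hb : 0 < b) (hm : 0 < m) (hn : 0 < n)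
    (hGcont : Continuous G) (hGrange : ∀ t, G t ∈ Set.Icc (0:ℝ) 1)
    (hGlt : ∀ t, G t < 1) (hG1 : Tendsto G atTop (nhds 1)) :
    Tendsto
      (fun t => (1 - regIncBeta (1 - (1 - G t ^ a) ^ b) m n) /
        ((1 - G t ^ a) ^ (b * n) / (n * betaFn m n)))
      atTop (nhds 1) := by
  set B := betaFn m n with hB
  have hBpos : 0 < B := betaFn_pos hm hn
  -- the small quantity u t = (1 - G t ^ a) ^ b
  set u : ℝ → ℝ := fun t => (1 - G t ^ a) ^ b with hu
  have hs_pos : ∀ t, 0 < 1 - G t ^ a := by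
    intro t
    have := Real.rpow_lt_one (hGrange t).1 (hGlt t) ha
    linarith
  have hu_pos : ∀ t, 0 < u t := fun t => Real.rpow_pos_of_pos (hs_pos t) b
  -- u t → 0
  have hs_tendsto : Tendsto (fun t => 1 - G t ^ a) atTop (nhds 0) := by
    have h1 : Tendsto (fun t => G t ^ a) atTop (nhds 1) := by
      have : ContinuousAt (fun x : ℝ => x ^ a) 1 :=
        Real.continuousAt_rpow_const 1 a (Or.inl one_ne_zero)
      simpa [Real.one_rpow, Function.comp_def] using this.tendsto.comp hG1
    have := (tendsto_const_nhds (x := (1:ℝ))).sub h1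
    simpa using this
  have hu_tendsto : Tendsto u atTop (nhds 0) := by
    have : ContinuousAt (fun x : ℝ => x ^ b) 0 :=
      Real.continuousAt_rpow_const 0 b (Or.inr hb.le)
    have h := this.tendsto.comp hs_tendsto
    simpa [Real.zero_rpow hb.ne', Function.comp_def] using h
  -- eventually u t ≤ 1/2
  have hev : ∀ᶠ t in atTop, u t ≤ 1/2 := by
    have := hu_tendsto (Iio_mem_nhds (show (0:ℝ) < 1/2 by norm_num))
    filter_upwards [this] with t ht
    exact le_of_lt ht
  -- the limiting bounds
  have hLlim : Tendsto (fun t => min ((1 - u t) ^ (m - 1)) 1) atTop (nhds 1) := by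
    have h1 : Tendsto (fun t => (1 - u t) ^ (m - 1)) atTop (nhds 1) := by
      have hc : ContinuousAt (fun x : ℝ => x ^ (m - 1)) 1 :=
        Real.continuousAt_rpow_const 1 (m - 1) (Or.inl one_ne_zero)
      have h2 : Tendsto (fun t => 1 - u t) atTop (nhds 1) := by
        have := (tendsto_const_nhds (x := (1:ℝ))).sub hu_tendsto
        simpa using this
      simpa [Real.one_rpow, Function.comp_def] using hc.tendsto.comp h2
    have := h1.min (tendsto_const_nhds (x := (1:ℝ)))
    simpa using this
  have hUlim : Tendsto (fun t => max ((1 - u t) ^ (m - 1)) 1) atTop (nhds 1) := by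
    have h1 : Tendsto (fun t => (1 - u t) ^ (m - 1)) atTop (nhds 1) := by
      have hc : ContinuousAt (fun x : ℝ => x ^ (m - 1)) 1 :=
        Real.continuousAt_rpow_const 1 (m - 1) (Or.inl one_ne_zero)
      have h2 : Tendsto (fun t => 1 - u t) atTop (nhds 1) := by
        have := (tendsto_const_nhds (x := (1:ℝ))).sub hu_tendsto
        simpa using this
      simpa [Real.one_rpow, Function.comp_def] using hc.tendsto.comp h2
    have := h1.max (tendsto_const_nhds (x := (1:ℝ)))
    simpa using this
  -- squeeze
  apply tendsto_of_tendsto_of_tendsto_of_le_of_le' hLlim hUlim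
  · filter_upwards [hev] with t ht
    have hut := hu_pos t
    have hIb := tail_bounds hm hn hut ht
    have hunpos : 0 < u t ^ n := Real.rpow_pos_of_pos hut n
    -- rewrite the ratio
    have hratio : (1 - regIncBeta (1 - (1 - G t ^ a) ^ b) m n) /
        ((1 - G t ^ a) ^ (b * n) / (n * betaFn m n)) =
        n * (∫ v in (1 - u t)..1, v ^ (m - 1) * (1 - v) ^ (n - 1)) / u t ^ n := by
      have hsplit := betaFn_split hm hn hut ht
      have hpow : (1 - G t ^ a) ^ (b * n) = u t ^ n := by
        show (1 - G t ^ a) ^ (b * n) = ((1 - G t ^ a) ^ b) ^ n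
        exact Real.rpow_mul (hs_pos t).le b n
      simp only [regIncBeta, ← hB, hpow]
      rw [eq_div_iff hunpos.ne']
      have h1 : (1 : ℝ) - 1 / B * ∫ v in (0:ℝ)..(1 - u t), v ^ (m - 1) * (1 - v) ^ (n - 1) =
          (1 / B) * ∫ v in (1 - u t)..1, v ^ (m - 1) * (1 - v) ^ (n - 1) := by
        field_simp
        linarith [hsplit]
      rw [h1]
      field_simp
    rw [hratio, le_div_iff₀ hunpos]
    calc min ((1 - u t) ^ (m - 1)) 1 * u t ^ n
        = (min ((1 - u t) ^ (m - 1)) 1 * (u t ^ n / n)) * n := by field_simp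
      _ ≤ (∫ v in (1 - u t)..1, v ^ (m - 1) * (1 - v) ^ (n - 1)) * n :=
          mul_le_mul_of_nonneg_right hIb.1 hn.le
      _ = n * (∫ v in (1 - u t)..1, v ^ (m - 1) * (1 - v) ^ (n - 1)) := by ring
  · filter_upwards [hev] with t ht
    have hut := hu_pos t
    have hIb := tail_bounds hm hn hut ht
    have hunpos : 0 < u t ^ n := Real.rpow_pos_of_pos hut n
    have hratio : (1 - regIncBeta (1 - (1 - G t ^ a) ^ b) m n) /
        ((1 - G t ^ a) ^ (b * n) / (n * betaFn m n)) =
        n * (∫ v in (1 - u t)..1, v ^ (m - 1) * (1 - v) ^ (n - 1)) / u t ^ n := by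
      have hsplit := betaFn_split hm hn hut ht
      have hpow : (1 - G t ^ a) ^ (b * n) = u t ^ n := by
        show (1 - G t ^ a) ^ (b * n) = ((1 - G t ^ a) ^ b) ^ n
        exact Real.rpow_mul (hs_pos t).le b n
      simp only [regIncBeta, ← hB, hpow]
      rw [eq_div_iff hunpos.ne']
      have h1 : (1 : ℝ) - 1 / B * ∫ v in (0:ℝ)..(1 - u t), v ^ (m - 1) * (1 - v) ^ (n - 1) =
          (1 / B) * ∫ v in (1 - u t)..1, v ^ (m - 1) * (1 - v) ^ (n - 1) := by
        field_simp
        linarith [hsplit]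
      rw [h1]
      field_simp
    rw [hratio, div_le_iff₀ hunpos]
    calc n * (∫ v in (1 - u t)..1, v ^ (m - 1) * (1 - v) ^ (n - 1))
        ≤ n * (max ((1 - u t) ^ (m - 1)) 1 * (u t ^ n / n)) :=
          mul_le_mul_of_nonneg_left hIb.2 hn.le
      _ = max ((1 - u t) ^ (m - 1)) 1 * u t ^ n := by field_simp
end
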